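/- arXiv:1912.12223 — 5 statements merged into one kernel-verified Lean document; each statement's English description precedes it below -/
import Mathlib

section
/- A bitopological space (S, τ₁, τ₂) is pairwise compact if and only if every τ₁-closed set is compact in (S, τ₂) and every τ₂-closed set is compact in (S, τ₁). -/
/-- A bitopological space `(S, t1, t2)` is pairwise compact if every cover of `S`
by sets each open in `t1` or in `t2` has a finite subcover. -/
def PairwiseCompact (S : Type*) (t1 t2 : TopologicalSpace S) : Prop :=
  ∀ 𝒰 : Set (Set S), (∀ U ∈ 𝒰, @IsOpen S t1 U ∨ @IsOpen S t2 U) → ⋃₀ 𝒰 = Set.univ →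
    ∃ ℱ ⊆ 𝒰, ℱ.Finite ∧ ⋃₀ ℱ = Set.univ

theorem pairwiseCompact_iff_closed_compact (S : Type*) (t1 t2 : TopologicalSpace S) :
    PairwiseCompact S t1 t2 ↔
      (∀ C : Set S, @IsClosed S t1 C → @IsCompact S t2 C) ∧
      (∀ C : Set S, @IsClosed S t2 C → @IsCompact S t1 C) := by
  classical
  constructor
  · intro h
    have key : ∀ (ta tb : TopologicalSpace S),
        (∀ 𝒰 : Set (Set S), (∀ U ∈ 𝒰, @IsOpen S ta U ∨ @IsOpen S tb U) → ⋃₀ 𝒰 = Set.univ →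
          ∃ ℱ ⊆ 𝒰, ℱ.Finite ∧ ⋃₀ ℱ = Set.univ) →
        ∀ C : Set S, @IsClosed S ta C → @IsCompact S tb C := by
      intro ta tb hp C hC
      rw [@isCompact_iff_finite_subcover S tb]
      intro ι U hU hcov
      obtain ⟨ℱ, hsub, hfin, hunion⟩ := hp (Set.range U ∪ {Cᶜ})
        (by
          rintro V (⟨i, rfl⟩ | rfl)
          · exact Or.inr (hU i)
          · exact Or.inl hC.isOpen_compl)
        (by
          apply Set.eq_univ_of_forall
          intro x
          by_cases hx : x ∈ C
          · obtain ⟨_, ⟨i, rfl⟩, hxi⟩ := hcov hx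
            exact ⟨U i, Or.inl ⟨i, rfl⟩, hxi⟩
          · exact ⟨Cᶜ, Or.inr rfl, hx⟩)
      have h2 : ℱ \ {Cᶜ} ⊆ Set.range U := by
        intro V hV
        rcases hsub hV.1 with h' | h'
        · exact h'
        · exact absurd h' hV.2
      have hfin2 : (ℱ \ {Cᶜ}).Finite := hfin.subset Set.diff_subset
      choose g hg using fun (V : Set S) (hV : V ∈ ℱ \ {Cᶜ}) => h2 hV
      refine ⟨hfin2.toFinset.attach.image fun V => g V.1 (hfin2.mem_toFinset.mp V.2), ?_⟩
      intro x hx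
      have : x ∈ ⋃₀ ℱ := hunion ▸ Set.mem_univ x
      obtain ⟨V, hVℱ, hxV⟩ := this
      have hVne : V ∈ ℱ \ {Cᶜ} := ⟨hVℱ, by rintro rfl; exact hxV hx⟩
      refine Set.mem_iUnion₂.mpr ⟨g V hVne, ?_, ?_⟩
      · exact Finset.mem_image.mpr ⟨⟨V, hfin2.mem_toFinset.mpr hVne⟩, Finset.mem_attach _ _, rfl⟩
      · rw [hg V hVne]; exact hxV
    exact ⟨key t1 t2 h, key t2 t1 (fun 𝒰 h𝒰 => h 𝒰 (fun U hU => (h𝒰 U hU).symm))⟩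
  · rintro ⟨h1, h2⟩ 𝒰 hopen hcov
    set 𝒰₁ : Set (Set S) := {U ∈ 𝒰 | @IsOpen S t1 U} with h𝒰₁
    set 𝒰₂ : Set (Set S) := {U ∈ 𝒰 | @IsOpen S t2 U} with h𝒰₂
    have hAclosed : @IsClosed S t1 (⋃₀ 𝒰₁)ᶜ :=
      @IsOpen.isClosed_compl S t1 _ (@isOpen_sUnion S t1 _ fun V hV => hV.2)
    have hAcomp : @IsCompact S t2 (⋃₀ 𝒰₁)ᶜ := h1 _ hAclosed
    have hAcover : (⋃₀ 𝒰₁)ᶜ ⊆ ⋃ (V : ↥𝒰₂), (V : Set S) := by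
      intro x hx
      obtain ⟨V, hV𝒰, hxV⟩ := hcov ▸ Set.mem_univ x
      rcases hopen V hV𝒰 with h' | h'
      · exact absurd ⟨V, ⟨hV𝒰, h'⟩, hxV⟩ hx
      · exact Set.mem_iUnion.mpr ⟨⟨V, hV𝒰, h'⟩, hxV⟩
    obtain ⟨t2', ht2'⟩ := @IsCompact.elim_finite_subcover S t2 _ _ hAcomp (fun V : ↥𝒰₂ => (V : Set S))
      (fun V => V.2.2) hAcover
    set ℱ₂ : Set (Set S) := Subtype.val '' (t2' : Set ↥𝒰₂) with hℱ₂
    have hℱ₂fin : ℱ₂.Finite := (t2'.finite_toSet.image _)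
    have hℱ₂sub : ℱ₂ ⊆ 𝒰 := by rintro V ⟨⟨W, hW⟩, -, rfl⟩; exact hW.1
    have hBclosed : @IsClosed S t2 (⋃₀ ℱ₂)ᶜ :=
      @IsOpen.isClosed_compl S t2 _ (@isOpen_sUnion S t2 _ fun V hV => by
        obtain ⟨⟨W, hW⟩, -, rfl⟩ := hV; exact hW.2)
    have hBcomp : @IsCompact S t1 (⋃₀ ℱ₂)ᶜ := h2 _ hBclosed
    have hBsub : (⋃₀ ℱ₂)ᶜ ⊆ ⋃₀ 𝒰₁ := by
      intro x hx
      by_contra hx1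
      have : x ∈ ⋃₀ ℱ₂ := by
        obtain ⟨V, hVt, hxV⟩ := Set.mem_iUnion₂.mp (ht2' (by exact hx1))
        exact ⟨V, ⟨V, hVt, rfl⟩, hxV⟩
      exact hx this
    have hBcover : (⋃₀ ℱ₂)ᶜ ⊆ ⋃ (V : ↥𝒰₁), (V : Set S) := by
      intro x hx
      obtain ⟨V, hV, hxV⟩ := hBsub hx
      exact Set.mem_iUnion.mpr ⟨⟨V, hV⟩, hxV⟩
    obtain ⟨t1', ht1'⟩ := @IsCompact.elim_finite_subcover S t1 _ _ hBcomp (fun V : ↥𝒰₁ => (V : Set S))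
      (fun V => V.2.2) hBcover
    set ℱ₁ : Set (Set S) := Subtype.val '' (t1' : Set ↥𝒰₁) with hℱ₁
    refine ⟨ℱ₁ ∪ ℱ₂, ?_, ?_, ?_⟩
    · rintro V (⟨⟨W, hW⟩, -, rfl⟩ | hV)
      · exact hW.1
      · exact hℱ₂sub hV
    · exact (t1'.finite_toSet.image _).union hℱ₂fin
    · apply Set.eq_univ_of_forall
      intro x
      by_cases hx : x ∈ ⋃₀ ℱ₂
      · obtain ⟨V, hV, hxV⟩ := hx
        exact ⟨V, Or.inr hV, hxV⟩
      · obtain ⟨V, hVt, hxV⟩ := Set.mem_iUnion₂.mp (ht1' hx)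
        exact ⟨V, Or.inl ⟨V, hVt, rfl⟩, hxV⟩
end

section
/- Let (S, τ, R) be a Priestley space in which additionally R⁻¹(C) is clopen for every clopen C ⊆ S (an 'HSpa' object). Let L be a finite bounded distributive lattice with Heyting implication r₁ → r₂ = ⋁{ℓ ∈ L : r₁ ∧ ℓ ≤ r₂}. For continuous order-preserving f, g : S → L, define (f → g)(s) = ⋀{ f(s') → g(s') : s R s' }. Then f → g is continuous, i.e., (f → g)⁻¹({ℓ}) is clopen for each ℓ ∈ L. -/
/-- `f` is continuous (for topology `t` on `S` and the discrete topology on `L`) and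
order-preserving from the relation `R` to the lattice order on `L`. -/
def ContOP {S L : Type*} (t : TopologicalSpace S) [Lattice L] (R : S → S → Prop)
    (f : S → L) : Prop :=
  @Continuous S L t ⊥ f ∧ ∀ x y, R x y → f x ≤ f y

/-- Heyting implication on a finite bounded lattice:
`a → b = ⋁ { ℓ : a ⊓ ℓ ≤ b }`. -/
noncomputable def latImp {L : Type*} [Lattice L] [BoundedOrder L] [Fintype L]
    (a b : L) : L :=
  letI : DecidablePred (fun ℓ : L => a ⊓ ℓ ≤ b) := Classical.decPred _
  (Finset.univ.filter fun ℓ : L => a ⊓ ℓ ≤ b).sup id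

/-- The pointwise intuitionistic implication
`(f → g)(s) = ⋀ { f s' → g s' : R s s' }` (a finite meet, as `L` is finite). -/
noncomputable def ptImp {S L : Type*} [Lattice L] [BoundedOrder L] [Fintype L]
    (R : S → S → Prop) (f g : S → L) (s : S) : L :=
  letI : DecidablePred (fun ℓ : L => ∃ s', R s s' ∧ latImp (f s') (g s') = ℓ) :=
    Classical.decPred _
  (Finset.univ.filter fun ℓ : L => ∃ s', R s s' ∧ latImp (f s') (g s') = ℓ).inf id

/-- In a Priestley space in which `R⁻¹` of every clopen set is clopen, the pointwise
implication of continuous order-preserving maps into a finite bounded distributive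
lattice has clopen fibers, i.e. it is continuous for the discrete topology on `L`. -/
theorem ptImp_fibers_clopen
    (S : Type*) (t : TopologicalSpace S) (R : S → S → Prop) [IsPartialOrder S R]
    (hcomp : @CompactSpace S t)
    (hsep : ∀ x y : S, ¬ R x y → ∃ W : Set S, @IsClopen S t W ∧
      (∀ a b, R a b → a ∈ W → b ∈ W) ∧ x ∈ W ∧ y ∉ W)
    (hR : ∀ C : Set S, @IsClopen S t C →
      @IsClopen S t {y : S | ∃ x ∈ C, R y x})
    (L : Type*) [DistribLattice L] [BoundedOrder L] [Fintype L]
    (f g : S → L) (hf : ContOP t R f) (hg : ContOP t R g) :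
    ∀ ℓ : L, @IsClopen S t ((ptImp R f g) ⁻¹' {ℓ}) := by

  classical
  letI : TopologicalSpace S := t
  letI : TopologicalSpace L := ⊥
  haveI : DiscreteTopology L := ⟨rfl⟩
  set h : S → L := fun s => latImp (f s) (g s) with hh
  have hcont : Continuous h := by
    have hp : Continuous fun s => (f s, g s) := hf.1.prodMk hg.1
    exact (continuous_of_discreteTopology (f := fun p : L × L => latImp p.1 p.2)).comp hp
  have hA : ∀ v : L, IsClopen {s : S | ∃ s', R s s' ∧ h s' = v} := by
    intro v
    have h1 := hR (h ⁻¹' {v}) ((isClopen_discrete _).preimage hcont)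
    convert h1 using 1
    ext s
    simp only [Set.mem_setOf_eq, Set.mem_preimage, Set.mem_singleton_iff]
    tauto
  set F : S → Finset L := fun s =>
    Finset.univ.filter (fun v => ∃ s', R s s' ∧ h s' = v) with hF'
  have hF : ∀ T : Finset L, IsClopen (F ⁻¹' {T}) := by
    intro T
    have heq : F ⁻¹' {T} = ⋂ v : L,
        (if v ∈ T then {s : S | ∃ s', R s s' ∧ h s' = v}
         else {s : S | ∃ s', R s s' ∧ h s' = v}ᶜ) := by
      ext s
      simp only [Set.mem_preimage, Set.mem_singleton_iff, Set.mem_iInter, hF',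
        Finset.ext_iff, Finset.mem_filter, Finset.mem_univ, true_and]
      constructor
      · intro hT v
        by_cases hv : v ∈ T <;> simp [hv, hT v] <;> tauto
      · intro hT v
        have := hT v
        by_cases hv : v ∈ T <;> simp [hv] at this <;> simp [hv] <;> tauto
    rw [heq]
    apply isClopen_iInter_of_finite
    intro v
    split_ifs with hv
    · exact hA v
    · exact (hA v).compl
  have hpt : ∀ s, ptImp R f g s = (F s).inf id := by
    intro s
    simp only [ptImp, hF']
    rfl
  intro ℓ
  have heq : (ptImp R f g) ⁻¹' {ℓ} =
      ⋃ T ∈ Finset.univ.filter (fun T : Finset L => T.inf id = ℓ), F ⁻¹' {T} := by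
    ext s
    simp only [Set.mem_preimage, Set.mem_singleton_iff, Set.mem_iUnion,
      Finset.mem_filter, Finset.mem_univ, true_and, hpt s]
    constructor
    · intro hs; exact ⟨F s, ⟨hs, rfl⟩⟩
    · rintro ⟨T, hT, rfl⟩; exact hT
  rw [heq]
  exact isClopen_biUnion_finset fun T _ => hF T
end

section
/- Let A be a distributive lattice and x, y ∈ A with x ≠ y. Then there exists a prime ideal P of A containing exactly one of x, y. -/
open Order

lemma prime_ideal_separation_aux (A : Type*) [DistribLattice A]
    {x y : A} (hyx : ¬ y ≤ x) :
    ∃ P : Order.Ideal A, Order.Ideal.IsPrime P ∧ x ∈ P ∧ y ∉ P := by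
  classical
  set B := WithBot (WithTop A)
  let e : A → B := fun a => ((a : WithTop A) : B)
  have he_le : ∀ a b : A, e a ≤ e b ↔ a ≤ b := by
    intro a b; simp only [e]; rw [WithBot.coe_le_coe, WithTop.coe_le_coe]
  have he_sup : ∀ a b : A, e (a ⊔ b) = e a ⊔ e b := by
    intro a b; simp only [e]; norm_cast
  have he_inf : ∀ a b : A, e (a ⊓ b) = e a ⊓ e b := by
    intro a b; simp [e, WithBot.coe_le_coe, WithTop.coe_le_coe, WithBot.coe_sup, WithTop.coe_sup, WithBot.coe_inf, WithTop.coe_inf]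
  have hdisj : Disjoint ((PFilter.principal (e y) : PFilter B) : Set B)
      ((Ideal.principal (e x) : Ideal B) : Set B) := by
    rw [Set.disjoint_left]
    intro z hz hz'
    have h1 : e y ≤ z := hz
    have h2 : z ≤ e x := hz'
    exact hyx ((he_le y x).1 (h1.trans h2))
  obtain ⟨J, hJprime, hIJ, hJF⟩ :=
    DistribLattice.prime_ideal_of_disjoint_filter_ideal hdisj
  have hxJ : e x ∈ J := hIJ (Ideal.mem_principal_self)
  have hyJ : e y ∉ J := Set.disjoint_left.1 hJF (le_refl (e y))
  have hSet : IsIdeal {a : A | e a ∈ J} := by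
    refine ⟨?_, ⟨x, hxJ⟩, ?_⟩
    · intro a b hab ha
      exact J.lower ((he_le b a).2 hab) ha
    · intro a ha b hb
      refine ⟨a ⊔ b, ?_, le_sup_left, le_sup_right⟩
      show e (a ⊔ b) ∈ J
      rw [he_sup]
      exact J.sup_mem ha hb
  refine ⟨hSet.toIdeal, ?_, hxJ, hyJ⟩
  have hproper : Ideal.IsProper hSet.toIdeal := Ideal.isProper_of_notMem hyJ
  refine Ideal.IsPrime.of_mem_or_mem ?_
  intro a b hab
  have : e a ⊓ e b ∈ J := by rw [← he_inf]; exact hab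
  exact hJprime.mem_or_mem this

/-- Stone's prime ideal separation theorem: in a distributive lattice, any two
distinct elements are separated by a prime ideal containing exactly one of them. -/
theorem prime_ideal_separation (A : Type*) [DistribLattice A]
    (x y : A) (hxy : x ≠ y) :
    ∃ P : Order.Ideal A, Order.Ideal.IsPrime P ∧
      ((x ∈ P ∧ y ∉ P) ∨ (y ∈ P ∧ x ∉ P)) := by
  rcases not_and_or.1 (fun h => hxy (le_antisymm h.1 h.2)) with h | h
  · obtain ⟨P, hP, h1, h2⟩ := prime_ideal_separation_aux A h
    exact ⟨P, hP, Or.inr ⟨h1, h2⟩⟩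
  · obtain ⟨P, hP, h1, h2⟩ := prime_ideal_separation_aux A h
    exact ⟨P, hP, Or.inl ⟨h1, h2⟩⟩
end

section
/- Let (S, τ, R) be a Priestley space and L a finite bounded distributive lattice (discrete, with lattice order). The evaluation map δ : S → Hom(Hom_{PSpa}(S, L), L), δ(s)(f) = f(s), is injective. -/
/-- In a Priestley space, the evaluation map `δ(s)(f) = f s` into homomorphisms on the
lattice of continuous order-preserving maps into a finite bounded distributive
nontrivial lattice `L` is injective: if every continuous order-preserving `f` takes
the same value at `s` and `u`, then `s = u`. -/
theorem evaluation_injective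
    (S : Type*) (t : TopologicalSpace S) (R : S → S → Prop) [IsPartialOrder S R]
    (hcomp : @CompactSpace S t)
    (hsep : ∀ x y : S, ¬ R x y → ∃ W : Set S, @IsClopen S t W ∧
      (∀ a b, R a b → a ∈ W → b ∈ W) ∧ x ∈ W ∧ y ∉ W)
    (L : Type*) [DistribLattice L] [BoundedOrder L] [Fintype L] [Nontrivial L]
    (s u : S) (h : ∀ f : S → L, ContOP t R f → f s = f u) : s = u := by
  classical
  by_contra hne
  have key : ∀ x y : S, ¬ R x y → (∀ f : S → L, ContOP t R f → f x = f y) → False := by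
    intro x y hR hf
    obtain ⟨W, hW, hup, hxW, hyW⟩ := hsep x y hR
    set f : S → L := fun z => if z ∈ W then ⊤ else ⊥ with hfdef
    have hc : @Continuous S L t ⊥ f := by
      rw [continuous_def]
      intro V _
      have : f ⁻¹' V = (if ⊤ ∈ V then W else ∅) ∪ (if ⊥ ∈ V then Wᶜ else ∅) := by
        ext z
        by_cases hz : z ∈ W <;> simp [hfdef, hz] <;> split_ifs <;> simp_all
      rw [this]
      apply IsOpen.union <;> split_ifs
      exacts [hW.2, isOpen_empty, hW.1.isOpen_compl, isOpen_empty]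
    have := hf f ⟨hc, by
      intro a b hab
      by_cases ha : a ∈ W
      · simp [hfdef, ha, hup a b hab ha]
      · simp [hfdef, ha]⟩
    simp [hfdef, hxW, hyW] at this
  rcases Classical.em (R s u) with hsu | hsu
  · rcases Classical.em (R u s) with hus | hus
    · exact hne (Std.Antisymm.antisymm _ _ hsu hus)
    · exact absurd (key u s hus fun f hf => (h f hf).symm) id
  · exact absurd (key s u hsu (h)) id
end

section
/- Let (S, τ, R) be a Priestley space, L a finite bounded distributive lattice, and δ(s)(f) = f(s) the evaluation map from S to homomorphisms Hom_{PSpa}(S,L) → L. Then for s₁, s₂ ∈ S: s₁ R s₂ if and only if f(s₁) ≤ f(s₂) for every continuous order-preserving f : S → L. -/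
/-- In a Priestley space, `s₁ R s₂` holds iff `f s₁ ≤ f s₂` for every continuous
order-preserving map `f` into a finite bounded distributive nontrivial lattice. -/
theorem rel_iff_all_maps_le
    (S : Type*) (t : TopologicalSpace S) (R : S → S → Prop) [IsPartialOrder S R]
    (hcomp : @CompactSpace S t)
    (hsep : ∀ x y : S, ¬ R x y → ∃ W : Set S, @IsClopen S t W ∧
      (∀ a b, R a b → a ∈ W → b ∈ W) ∧ x ∈ W ∧ y ∉ W)
    (L : Type*) [DistribLattice L] [BoundedOrder L] [Fintype L] [Nontrivial L]
    (s₁ s₂ : S) :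
    R s₁ s₂ ↔ ∀ f : S → L, ContOP t R f → f s₁ ≤ f s₂ := by
  constructor
  · intro h f hf
    exact hf.2 _ _ h
  · intro h
    classical
    by_contra hR
    obtain ⟨W, hW, hup, hx, hy⟩ := hsep s₁ s₂ hR
    set f : S → L := fun s => if s ∈ W then ⊤ else ⊥ with hfdef
    have hc : @Continuous S L t ⊥ f := by
      letI := t
      rw [continuous_def]
      intro U _
      have : f ⁻¹' U = (if ⊤ ∈ U then W else ∅) ∪ (if ⊥ ∈ U then Wᶜ else ∅) := by
        ext s
        by_cases hs : s ∈ W <;> simp [hfdef, hs] <;> split <;> simp_all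
      rw [this]
      apply IsOpen.union <;> split
      · exact hW.2
      · exact isOpen_empty
      · exact hW.1.isOpen_compl
      · exact isOpen_empty
    have hmono : ∀ x y, R x y → f x ≤ f y := by
      intro x y hxy
      by_cases hx' : x ∈ W
      · have : y ∈ W := hup _ _ hxy hx'
        simp [hfdef, hx', this]
      · simp [hfdef, hx']
    have := h f ⟨hc, hmono⟩
    simp [hfdef, hx, hy] at this
end
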